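/- Let D₁ be the infinite matrix over the field ℚ(q, α, β) with D₁(i, i+1) = β⁻¹ and all other entries 0, and let E₁ be the infinite lower-triangular matrix with E₁(i,j) = β^{i-j}(α⁻¹ q^{j-1} C(i-1, j-1) + ∑_{r=0}^{j-2} C(i-j+r, r) q^r) for j ≤ i and 0 otherwise. Then D₁E₁ − qE₁D₁ = D₁ + E₁. -/

import Mathlib

open Finset

/-- `D₁` indexed by positive integers (`i : ℕ` stands for row `i+1`):
`D₁(i, i+1) = β⁻¹` and all other entries `0`. -/
noncomputable def D1 {K : Type*} [Field K] (β : K) (i j : ℕ) : K :=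
  if j = i + 1 then β⁻¹ else 0

/-- `E₁` indexed by positive integers (`i : ℕ` stands for row `i+1`); in 1-indexed form,
`E₁(i,j) = β^{i-j} (α⁻¹ q^{j-1} C(i-1, j-1) + ∑_{r=0}^{j-2} C(i-j+r, r) q^r)` for `j ≤ i`,
and `0` otherwise. -/
noncomputable def E1 {K : Type*} [Field K] (q α β : K) (i j : ℕ) : K :=
  if j ≤ i then
    β ^ (i - j) * (α⁻¹ * q ^ j * (i.choose j : K) +
      ∑ r ∈ range j, ((i - j + r).choose r : K) * q ^ r)
  else 0

/-- Entrywise matrix product; since each row of the factors has finitely many nonzero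
entries (all with index `< i + j + 2`), this finite sum equals the full product entry. -/
noncomputable def matMul {K : Type*} [Field K] (A B : ℕ → ℕ → K) (i j : ℕ) : K :=
  ∑ k ∈ range (i + j + 2), A i k * B k j

lemma hD {K : Type*} [Field K] (q α β : K) (i j : ℕ) :
    matMul (D1 β) (E1 q α β) i j = β⁻¹ * E1 q α β (i+1) j := by
  unfold matMul D1
  rw [Finset.sum_eq_single (i+1)]
  · simp
  · intro b _ hb; simp [hb]
  · intro h; exact absurd (Finset.mem_range.2 (by omega)) h

lemma hE {K : Type*} [Field K] (q α β : K) (i j : ℕ) (hj : j ≠ 0) :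
    matMul (E1 q α β) (D1 β) i j = E1 q α β i (j-1) * β⁻¹ := by
  unfold matMul D1
  rw [Finset.sum_eq_single (j-1)]
  · have : j = (j-1) + 1 := by omega
    simp [← this]
  · intro b _ hb
    have : j ≠ b + 1 := by omega
    simp [this]
  · intro h; exact absurd (Finset.mem_range.2 (by omega)) h

lemma hE0 {K : Type*} [Field K] (q α β : K) (i : ℕ) :
    matMul (E1 q α β) (D1 β) i 0 = 0 := by
  unfold matMul D1
  apply Finset.sum_eq_zero
  intro b _
  simp

-- key sum identity
lemma sumkey {K : Type*} [Field K] (q : K) (n m : ℕ) :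
    ∑ r ∈ range (m+1), ((n+1+r).choose r : K) * q ^ r
      - q * ∑ r ∈ range m, ((n+1+r).choose r : K) * q ^ r
      = ∑ r ∈ range (m+1), ((n+r).choose r : K) * q ^ r := by
  rw [Finset.sum_range_succ' (fun r => ((n+1+r).choose r : K) * q ^ r) m,
      Finset.sum_range_succ' (fun r => ((n+r).choose r : K) * q ^ r) m,
      Finset.mul_sum]
  simp only [Nat.add_zero, Nat.choose_zero_right]
  rw [add_sub_right_comm, add_right_cancel_iff, ← Finset.sum_sub_distrib]
  apply Finset.sum_congr rfl
  intro r _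
  have h : (n+1+(r+1)).choose (r+1) = (n+r+1).choose r + (n+r+1).choose (r+1) :=
    by rw [show n+1+(r+1) = (n+r+1)+1 by ring]; exact Nat.choose_succ_succ (n+r+1) r
  have h2 : n+1+r = n+r+1 := by ring
  have h3 : n+(r+1) = n+r+1 := by ring
  rw [h, h2, h3]
  push_cast
  ring

/-- over the field `ℚ(q, α, β)` (formalized as an arbitrary field with
`α, β ≠ 0`), `D₁E₁ − qE₁D₁ = D₁ + E₁`. -/
theorem stmt2 {K : Type*} [Field K] (q α β : K) (hα : α ≠ 0) (hβ : β ≠ 0) (i j : ℕ) :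
    matMul (D1 β) (E1 q α β) i j - q * matMul (E1 q α β) (D1 β) i j
      = D1 β i j + E1 q α β i j := by
  obtain rfl | ⟨m, rfl⟩ : j = 0 ∨ ∃ m, j = m + 1 := by
    rcases j with _ | m
    · exact Or.inl rfl
    · exact Or.inr ⟨m, rfl⟩
  · rw [hD, hE0, mul_zero, sub_zero]
    unfold D1 E1
    simp only [Nat.zero_le, if_true, range_zero, sum_empty, add_zero, pow_zero,
      Nat.choose_zero_right, Nat.cast_one, mul_one, Nat.sub_zero]
    rw [if_neg (by omega), pow_succ]
    field_simp
    ring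
  · rw [hD, hE q α β i (m+1) (by omega)]
    simp only [Nat.add_sub_cancel]
    rcases lt_trichotomy m i with hmi | rfl | hmi
    · -- m + 1 ≤ i
      obtain ⟨n, rfl⟩ : ∃ n, i = n + (m + 1) := ⟨i - (m+1), by omega⟩
      unfold D1 E1
      rw [if_pos (by omega), if_pos (by omega), if_neg (by omega), if_pos (by omega)]
      have e1 : n + (m+1) + 1 - (m+1) = n + 1 := by omega
      have e2 : n + (m+1) - m = n + 1 := by omega
      have e3 : n + (m+1) - (m+1) = n := by omega
      simp only [e1, e2, e3]
      have hpascal : ((n + (m+1) + 1).choose (m+1) : K)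
          = ((n + (m+1)).choose m : K) + ((n + (m+1)).choose (m+1) : K) := by
        rw [show n + (m+1) + 1 = (n + (m+1)) + 1 by ring,
          Nat.choose_succ_succ (n + (m+1)) m]
        push_cast; ring
      have hkey := sumkey q n m
      have hb : β⁻¹ * β ^ (n+1) = β ^ n := by
        rw [pow_succ']; field_simp
      linear_combination (β⁻¹ * β ^ (n+1)) * hkey
        + (α⁻¹ * q ^ (m+1) * (((n + (m+1)).choose (m+1) : ℕ) : K)
            + ∑ r ∈ range (m+1), (((n + r).choose r : ℕ) : K) * q ^ r) * hb
        + (β⁻¹ * β ^ (n+1) * α⁻¹ * q ^ (m+1)) * hpascal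
    · -- j = i + 1
      unfold D1 E1
      rw [if_pos (by omega), if_pos (by omega), if_pos rfl, if_neg (by omega)]
      simp only [Nat.sub_self, pow_zero, one_mul, Nat.choose_self, Nat.cast_one, mul_one,
        Nat.zero_add]
      have hg : (∑ r ∈ range (m+1), (q:K) ^ r) - q * ∑ r ∈ range m, (q:K) ^ r = 1 := by
        rw [Finset.sum_range_succ' (fun r => (q:K) ^ r) m, Finset.mul_sum]
        have h2 : ∀ r ∈ range m, (q:K) ^ (r+1) = q * q ^ r := by intro r _; ring
        rw [Finset.sum_congr rfl h2]; ring
      linear_combination β⁻¹ * hg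
    · -- m > i : everything zero
      unfold D1 E1
      rw [if_neg (by omega), if_neg (by omega), if_neg (by omega), if_neg (by omega)]
      ring
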